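/- Feasibility rate of deterministic R-OpEx for monotone nonsmooth BVI: There is an absolute constant C > 0 such that the following holds. Let X ⊆ ℝ^n be nonempty compact convex with diameter D_X > 0, let F, H : ℝ^n → ℝ^n be monotone on X with ‖F(x₁) − F(x₂)‖ ≤ L_F‖x₁ − x₂‖ + M_F and ‖H(x₁) − H(x₂)‖ ≤ L_H‖x₁ − x₂‖ + M_H for all x₁, x₂ ∈ X, suppose ‖H(x)‖ ≤ C_H for all x ∈ X, and suppose the solution set X_F^* of VI(F, X) is nonempty. Fix an integer K ≥ 2, set η := K^{−1/4} and γ := D_X/(8D_X(L_F + ηL_H) + √(K(M_F² + η²M_H²))) (assume the denominator is positive), and run deterministic R-OpEx with τ_k = θ_k = 1, η_k = η, γ_k = γ for all k, producing x̄_K := (1/(K−1))·Σ_{k=1}^{K−1} x_{k+1}. Then Gap(x̄_K, F, X) := sup_{x ∈ X} ⟨F(x), x̄_K − x⟩ ≤ C·D_X·(D_X L_F/K + D_X L_H/K^{5/4} + M_F/K^{1/2} + M_H/K^{3/4} + C_H/K^{1/4}). -/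

import Mathlib

open RealInnerProductSpace

lemma aux_limit (a r : ℝ) (hr : 0 ≤ r) (h : ∀ t : ℝ, 0 < t → t ≤ 1 → 0 ≤ a + t * r) : 0 ≤ a := by
  by_contra hn
  push_neg at hn
  rcases eq_or_lt_of_le hr with h0 | hr'
  · have := h 1 one_pos le_rfl; nlinarith
  · have ht0 : 0 < min 1 (-a / (2 * r)) :=
      lt_min one_pos (div_pos (by linarith) (by linarith))
    have h1 := h _ ht0 (min_le_left _ _)
    have h2 : min 1 (-a / (2 * r)) * r ≤ (-a / (2 * r)) * r :=
      mul_le_mul_of_nonneg_right (min_le_right _ _) hr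
    have h3 : (-a / (2 * r)) * r = -a / 2 := by field_simp
    linarith

lemma tele_sum (f : ℕ → ℝ) (N : ℕ) : ∑ k ∈ Finset.Icc 1 N, (f k - f (k+1)) = f 1 - f (N+1) := by
  rw [← Finset.Ico_add_one_right_eq_Icc, Finset.sum_Ico_eq_sum_range]
  have h := Finset.sum_range_sub' (fun i => f (1 + i)) N
  simp only [Nat.add_sub_cancel] at *
  rw [show f 1 - f (N+1) = f (1+0) - f (1+N) by rw [Nat.add_comm 1 N]]
  exact h

lemma shift_sum (q : ℕ → ℝ) (N : ℕ) :
    ∑ k ∈ Finset.Icc 1 N, q (k-1) = q 0 - q N + ∑ k ∈ Finset.Icc 1 N, q k := by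
  have h : ∑ k ∈ Finset.Icc 1 N, ((fun j => q (j-1)) k - (fun j => q (j-1)) (k+1)) =
      (fun j => q (j-1)) 1 - (fun j => q (j-1)) (N+1) := tele_sum _ N
  simp only [Nat.add_sub_cancel, Nat.sub_self] at h
  rw [Finset.sum_sub_distrib] at h
  linarith

section Core

variable {E : Type*} [NormedAddCommGroup E] [InnerProductSpace ℝ E]

lemma prox_three_point {X : Set E} (hX : Convex ℝ X) (v xk y : E) (γ : ℝ) (hγ : 0 < γ)
    (hy : y ∈ X)
    (h : ∀ z ∈ X, ⟪v, y⟫ + 1/(2*γ) * ‖y - xk‖^2 ≤ ⟪v, z⟫ + 1/(2*γ) * ‖z - xk‖^2) :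
    ∀ z ∈ X, ⟪v, y - z⟫ ≤ 1/(2*γ) * (‖z - xk‖^2 - ‖z - y‖^2 - ‖y - xk‖^2) := by
  intro z hz
  set c := 1/(2*γ) with hc
  have hc0 : 0 < c := by rw [hc]; positivity
  have key : 0 ≤ ⟪v, z - y⟫ + 2*c*⟪y - xk, z - y⟫ := by
    apply aux_limit _ (c * ‖z - y‖^2) (by positivity)
    intro t ht0 ht1
    have hmem : y + t • (z - y) ∈ X := by
      have := hX hy hz (by linarith : (0:ℝ) ≤ 1 - t) ht0.le (by ring)
      convert this using 1
      module
    have h2 := h _ hmem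
    have e1 : ⟪v, y + t • (z - y)⟫ = ⟪v, y⟫ + t * ⟪v, z - y⟫ := by
      rw [inner_add_right, real_inner_smul_right]
    have e2 : ‖y + t • (z - y) - xk‖^2
        = ‖y - xk‖^2 + t*(2*⟪y - xk, z - y⟫) + t^2*‖z - y‖^2 := by
      have he : y + t • (z - y) - xk = (y - xk) + t • (z - y) := by abel
      rw [he, norm_add_sq_real, real_inner_smul_right, norm_smul]
      simp only [Real.norm_eq_abs, abs_of_pos ht0, mul_pow]
      ring
    rw [e1, e2] at h2
    have h3 : 0 ≤ t * ((⟪v, z - y⟫ + 2*c*⟪y - xk, z - y⟫) + t * (c * ‖z - y‖^2)) := by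
      nlinarith [h2]
    have h4 := le_of_mul_le_mul_left
      (by linarith : t * 0 ≤ t * ((⟪v, z - y⟫ + 2*c*⟪y - xk, z - y⟫) + t * (c * ‖z - y‖^2))) ht0
    linarith
  have e3 : ‖z - xk‖^2 = ‖z - y‖^2 + 2*⟪z - y, y - xk⟫ + ‖y - xk‖^2 := by
    have he : z - xk = (z - y) + (y - xk) := by abel
    rw [he, norm_add_sq_real]
  have e4 : ⟪v, y - z⟫ = -⟪v, z - y⟫ := by
    rw [← inner_neg_right]; congr 1; abel
  have e5 : ⟪y - xk, z - y⟫ = ⟪z - y, y - xk⟫ := real_inner_comm _ _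
  rw [e4, e3]
  nlinarith [key, e5]

set_option maxHeartbeats 1000000 in
lemma core_bound {X : Set E}
    (x G : ℕ → E) (N : ℕ) (hN : 1 ≤ N)
    (γ Lη Mη D : ℝ) (hγ : 0 < γ) (hLη : 0 ≤ Lη) (hMη : 0 ≤ Mη) (hD : 0 < D)
    (hγL : γ * Lη ≤ 1/8)
    (hmem : ∀ k ≤ N + 1, x k ∈ X)
    (h01 : x 0 = x 1)
    (hG01 : G 0 = G 1)
    (hd : ∀ k, 1 ≤ k → k ≤ N + 1 → ‖G k - G (k-1)‖ ≤ Lη * ‖x k - x (k-1)‖ + Mη)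
    (hdiam : ∀ a ∈ X, ∀ b ∈ X, ‖a - b‖ ≤ 2 * D)
    (hstar : ∀ k, 1 ≤ k → k ≤ N → ∀ z ∈ X,
      ⟪G k + (G k - G (k-1)), x (k+1) - z⟫ ≤
        1/(2*γ) * (‖z - x k‖^2 - ‖z - x (k+1)‖^2 - ‖x (k+1) - x k‖^2)) :
    ∀ z ∈ X, ∑ k ∈ Finset.Icc 1 N, ⟪G (k+1), x (k+1) - z⟫ ≤
      2*D^2/γ + D^2*Lη/2 + 2*D*Mη + 2*γ*N*Mη^2 := by
  intro z hz
  set c : ℝ := 1/(2*γ) with hc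
  have hc0 : 0 < c := by rw [hc]; positivity
  have hcγ : c * (2*γ) = 1 := by rw [hc]; field_simp
  have hLc : Lη ≤ c/4 := by
    rw [hc]; rw [div_div]
    rw [le_div_iff₀ (by positivity)]
    calc Lη * (2*γ*4) = 8 * (γ * Lη) := by ring
    _ ≤ 8 * (1/8) := by linarith
    _ = 1 := by norm_num
  set f : ℕ → ℝ := fun k => c * ‖z - x k‖^2 with hf
  set g : ℕ → ℝ := fun k => ⟪G k - G (k-1), x k - z⟫ with hg
  set q : ℕ → ℝ := fun k => ‖x (k+1) - x k‖^2 with hq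
  have hq0 : ∀ k, 0 ≤ q k := fun k => by simp only [hq]; positivity
  -- auxiliary: Mη * r ≤ 2γMη² + (c/4) q
  have hMr : ∀ r : ℝ, 0 ≤ r → Mη * r ≤ 2*γ*Mη^2 + c/4 * r^2 := by
    intro r hr
    have h4 : c/4 = 1/(8*γ) := by rw [hc]; ring
    rw [h4, ← sub_le_iff_le_add']
    rw [show (1:ℝ)/(8*γ) * r^2 = r^2/(8*γ) by ring, le_div_iff₀ (by positivity)]
    nlinarith [sq_nonneg (4*γ*Mη - r)]
  -- per step inequality
  have hper : ∀ k ∈ Finset.Icc 1 N, ⟪G (k+1), x (k+1) - z⟫ ≤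
      (f k - f (k+1)) + (g (k+1) - g k) +
        ((Lη/2) * q (k-1) + (Lη/2 + c/4 - c) * q k + 2*γ*Mη^2) := by
    intro k hk
    rw [Finset.mem_Icc] at hk
    obtain ⟨hk1, hkN⟩ := hk
    have hx3 := hstar k hk1 hkN z hz
    -- decompose G (k+1)
    have hdec : ⟪G (k+1), x (k+1) - z⟫ =
        ⟪G k + (G k - G (k-1)), x (k+1) - z⟫ + g (k+1)
          - ⟪G k - G (k-1), x k - z⟫ - ⟪G k - G (k-1), x (k+1) - x k⟫ := by
      have e1 : g (k+1) = ⟪G (k+1) - G k, x (k+1) - z⟫ := by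
        simp only [hg, Nat.add_sub_cancel]
      rw [e1]
      have e2 : (⟪G k - G (k-1), x k - z⟫ : ℝ) + ⟪G k - G (k-1), x (k+1) - x k⟫
          = ⟪G k - G (k-1), x (k+1) - z⟫ := by
        rw [← inner_add_right]
        congr 1; abel
      have e3 : (⟪G k + (G k - G (k-1)), x (k+1) - z⟫ : ℝ)
          = ⟪G k, x (k+1) - z⟫ + ⟪G k - G (k-1), x (k+1) - z⟫ := inner_add_left _ _ _
      have e4 : (⟪G (k+1), x (k+1) - z⟫ : ℝ)
          = ⟪G k, x (k+1) - z⟫ + ⟪G (k+1) - G k, x (k+1) - z⟫ := by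
        rw [← inner_add_left]; congr 1; abel
      linarith [e2, e3, e4]
    -- bound the cross term
    have hdk : ‖G k - G (k-1)‖ ≤ Lη * ‖x k - x (k-1)‖ + Mη := hd k hk1 (by omega)
    have hcross : -⟪G k - G (k-1), x (k+1) - x k⟫ ≤
        (Lη/2) * q (k-1) + (Lη/2) * q k + (2*γ*Mη^2 + c/4 * q k) := by
      have h1 : -⟪G k - G (k-1), x (k+1) - x k⟫ ≤ ‖G k - G (k-1)‖ * ‖x (k+1) - x k‖ := by
        have := abs_real_inner_le_norm (G k - G (k-1)) (x (k+1) - x k)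
        have h2 := neg_abs_le (⟪G k - G (k-1), x (k+1) - x k⟫ : ℝ)
        linarith
      have hxx : x k - x (k-1) = x ((k-1)+1) - x (k-1) := by
        congr 2; omega
      have h2 : ‖G k - G (k-1)‖ * ‖x (k+1) - x k‖ ≤
          (Lη * ‖x ((k-1)+1) - x (k-1)‖ + Mη) * ‖x (k+1) - x k‖ := by
        apply mul_le_mul_of_nonneg_right _ (norm_nonneg _)
        rw [← hxx]; exact hdk
      have h3 : Lη * ‖x ((k-1)+1) - x (k-1)‖ * ‖x (k+1) - x k‖ ≤
          (Lη/2) * q (k-1) + (Lη/2) * q k := by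
        simp only [hq]
        nlinarith [sq_nonneg (‖x ((k-1)+1) - x (k-1)‖ - ‖x (k+1) - x k‖),
          norm_nonneg (x ((k-1)+1) - x (k-1)), norm_nonneg (x (k+1) - x k)]
      have h4 : Mη * ‖x (k+1) - x k‖ ≤ 2*γ*Mη^2 + c/4 * q k := by
        have := hMr ‖x (k+1) - x k‖ (norm_nonneg _)
        simpa only [hq] using this
      nlinarith [h1, h2, h3, h4]
    have hfs : f k - f (k+1) - c * q k =
        c * (‖z - x k‖^2 - ‖z - x (k+1)‖^2 - ‖x (k+1) - x k‖^2) := by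
      simp only [hf, hq]; ring
    rw [hdec]
    have hgk : (⟪G k - G (k-1), x k - z⟫ : ℝ) = g k := rfl
    rw [hc] at hx3
    linarith [hx3, hcross]
  -- sum it up
  have hsum := Finset.sum_le_sum hper
  rw [Finset.sum_add_distrib, Finset.sum_add_distrib, tele_sum f N] at hsum
  -- telescope g
  have hgtel : ∑ k ∈ Finset.Icc 1 N, (g (k+1) - g k) = g (N+1) - g 1 := by
    have h1 := tele_sum g N
    have h2 : ∑ k ∈ Finset.Icc 1 N, (g (k+1) - g k)
        = -∑ k ∈ Finset.Icc 1 N, (g k - g (k+1)) := by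
      rw [← Finset.sum_neg_distrib]
      apply Finset.sum_congr rfl
      intro k _; ring
    rw [h2, h1]; ring
  have hg1 : g 1 = 0 := by
    simp only [hg, Nat.sub_self, hG01, sub_self, inner_zero_left]
  -- third sum
  have h3sum : ∑ k ∈ Finset.Icc 1 N, ((Lη/2) * q (k-1) + (Lη/2 + c/4 - c) * q k + 2*γ*Mη^2)
      = (Lη/2) * (∑ k ∈ Finset.Icc 1 N, q (k-1))
        + (Lη/2 + c/4 - c) * (∑ k ∈ Finset.Icc 1 N, q k) + (N : ℝ) * (2*γ*Mη^2) := by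
    rw [Finset.sum_add_distrib, Finset.sum_add_distrib, ← Finset.mul_sum, ← Finset.mul_sum,
      Finset.sum_const, Nat.card_Icc]
    simp only [Nat.add_sub_cancel, nsmul_eq_mul]
  have hq00 : q 0 = 0 := by simp [hq, ← h01]
  have hshift := shift_sum q N
  rw [hq00] at hshift
  set S : ℝ := ∑ k ∈ Finset.Icc 1 N, q k with hS
  have hSN : q N ≤ S := by
    apply Finset.single_le_sum (fun i _ => hq0 i)
    rw [Finset.mem_Icc]; omega
  have hS0 : 0 ≤ S := le_trans (hq0 N) hSN
  -- third sum bound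
  have h3bd : (Lη/2) * (∑ k ∈ Finset.Icc 1 N, q (k-1))
        + (Lη/2 + c/4 - c) * S + (N : ℝ) * (2*γ*Mη^2)
      ≤ -(c/2) * q N + (N : ℝ) * (2*γ*Mη^2) := by
    rw [hshift]
    have hcoef : (Lη/2) * (0 - q N + S) + (Lη/2 + c/4 - c) * S
        ≤ -(c/2) * q N := by
      have h5 : (Lη + c/4 - c) * S ≤ (-(c/2)) * S := by
        apply mul_le_mul_of_nonneg_right _ hS0
        linarith
      have h6 : (-(c/2)) * S ≤ (-(c/2)) * q N := by
        apply mul_le_mul_of_nonpos_left hSN (by linarith)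
      linarith [h5, h6, mul_nonneg (by linarith : (0:ℝ) ≤ Lη/2) (hq0 N)]
    linarith
  -- terminal term
  have hgN : g (N+1) ≤ D^2*Lη/2 + c/2 * q N + 2*D*Mη := by
    have e1 : g (N+1) = ⟪G (N+1) - G N, x (N+1) - z⟫ := by
      simp only [hg, Nat.add_sub_cancel]
    have h1 : g (N+1) ≤ ‖G (N+1) - G N‖ * ‖x (N+1) - z‖ := by
      rw [e1]; exact real_inner_le_norm _ _
    have hdN := hd (N+1) (by omega) le_rfl
    simp only [Nat.add_sub_cancel] at hdN
    have hdm : ‖x (N+1) - z‖ ≤ 2*D := hdiam _ (hmem (N+1) le_rfl) z hz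
    have h2 : ‖G (N+1) - G N‖ * ‖x (N+1) - z‖
        ≤ (Lη * ‖x (N+1) - x N‖ + Mη) * (2*D) := by
      apply mul_le_mul hdN hdm (norm_nonneg _)
      positivity
    have h3 : 2*D*Lη*‖x (N+1) - x N‖ ≤ 4*γ*D^2*Lη^2 + c/2 * q N := by
      have hc2 : c/2 = 1/(4*γ) := by rw [hc]; ring
      rw [hc2]
      have : (1:ℝ)/(4*γ) * q N = q N / (4*γ) := by ring
      rw [this, ← sub_le_iff_le_add', le_div_iff₀ (by positivity)]
      simp only [hq]
      nlinarith [sq_nonneg (4*γ*D*Lη - ‖x (N+1) - x N‖)]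
    have h4 : 4*γ*D^2*Lη^2 ≤ D^2*Lη/2 := by
      have := mul_le_mul_of_nonneg_left hγL (by positivity : (0:ℝ) ≤ 4*D^2*Lη)
      nlinarith
    nlinarith [h1, h2, h3, h4]
  -- f bounds
  have hf1 : f 1 ≤ 2*D^2/γ := by
    have h1 : ‖z - x 1‖ ≤ 2*D := hdiam z hz (x 1) (hmem 1 (by omega))
    have h2 : f 1 ≤ c * (2*D)^2 := by
      simp only [hf]
      apply mul_le_mul_of_nonneg_left _ hc0.le
      exact pow_le_pow_left₀ (norm_nonneg _) h1 2
    have h3 : c * (2*D)^2 = 2*D^2/γ := by rw [hc]; field_simp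
    linarith
  have hfN : 0 ≤ f (N+1) := by simp only [hf]; positivity
  rw [hgtel, h3sum, hg1] at hsum
  have hNcast : (1:ℝ) ≤ (N:ℝ) := by exact_mod_cast hN
  linarith [hsum, h3bd, hgN, hf1, hfN]
end Core

-- standalone numeric lemma
set_option maxHeartbeats 1000000 in
lemma num_final (DX LF MF LH MH CH p nn γ B Lη Mη η : ℝ)
    (hD0 : 0 < DX) (hLF : 0 ≤ LF) (hMF : 0 ≤ MF) (hLH : 0 ≤ LH) (hMH : 0 ≤ MH)
    (hCH0 : 0 ≤ CH) (hp1 : 1 ≤ p) (hη : η = 1/p)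
    (hLη : Lη = LF + η * LH) (hMη : Mη = MF + η * MH)
    (hγpos : 0 < γ)
    (hγden : γ * (8 * DX * Lη + B) = DX)
    (hB0 : 0 ≤ B)
    (hBp : B ≤ p^2*MF + p*MH)
    (hBsq : B^2 = p^4*(MF^2+η^2*MH^2))
    (hnn1 : 1 ≤ nn) (hnnκ : nn ≤ p^4) (hnn2 : p^4 ≤ 2*nn) :
    nn⁻¹ * ((2*DX^2/γ + DX^2*Lη/2 + 2*DX*Mη + 2*γ*nn*Mη^2) + nn*(2*η*DX*CH))
      ≤ 100*DX*(DX*LF/p^4 + DX*LH/p^5 + MF/p^2 + MH/p^3 + CH/p) := by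
  have hp0 : 0 < p := by linarith
  have hη0 : 0 < η := by rw [hη]; positivity
  have hLη0 : 0 ≤ Lη := by rw [hLη]; positivity
  have hMη0 : 0 ≤ Mη := by rw [hMη]; positivity
  have h2Dγ : 2*DX^2/γ = 16*DX^2*Lη + 2*DX*B := by
    have h1 : DX/γ = 8*DX*Lη + B := by
      rw [eq_comm, eq_div_iff (ne_of_gt hγpos)]
      linarith [hγden]
    calc 2*DX^2/γ = 2*DX*(DX/γ) := by ring
    _ = 16*DX^2*Lη + 2*DX*B := by rw [h1]; ring
  have hγB : γ*B ≤ DX := by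
    have := mul_nonneg hγpos.le (by positivity : (0:ℝ) ≤ 8*DX*Lη)
    linarith [hγden]
  have hMη2 : Mη^2 ≤ 2*(MF^2+η^2*MH^2) := by
    rw [hMη]; nlinarith [sq_nonneg (MF - η*MH)]
  have hMB : 2*γ*nn*Mη^2 ≤ 4*DX*B := by
    have s1 : 2*γ*nn*Mη^2 ≤ 2*γ*(p^4)*Mη^2 := by
      have := mul_nonneg (mul_nonneg (by linarith : (0:ℝ) ≤ p^4 - nn) hγpos.le)
        (sq_nonneg Mη)
      nlinarith [this]
    have s2 : 2*γ*(p^4)*Mη^2 ≤ 4*γ*B^2 := by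
      have hc := mul_le_mul_of_nonneg_left hMη2
        (by positivity : (0:ℝ) ≤ 2*γ*(p^4))
      calc 2*γ*(p^4)*Mη^2 = 2*γ*(p^4) * Mη^2 := by ring
      _ ≤ 2*γ*(p^4) * (2*(MF^2+η^2*MH^2)) := hc
      _ = 4*γ*(p^4*(MF^2+η^2*MH^2)) := by ring
      _ = 4*γ*B^2 := by rw [hBsq]
    have s3 : 4*γ*B^2 ≤ 4*DX*B := by
      have hm := mul_le_mul_of_nonneg_right hγB hB0
      nlinarith [hm]
    linarith
  set T : ℝ := 17*DX^2*Lη + 6*DX*B + 2*DX*Mη with hT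
  have hA : 2*DX^2/γ + DX^2*Lη/2 + 2*DX*Mη + 2*γ*nn*Mη^2 ≤ T := by
    rw [hT]
    have : (0:ℝ) ≤ DX^2*Lη := by positivity
    linarith [hMB, h2Dγ]
  have hnnpos : (0:ℝ) < nn := by linarith
  have hsplit : nn⁻¹ * ((2*DX^2/γ + DX^2*Lη/2 + 2*DX*Mη + 2*γ*nn*Mη^2) + nn*(2*η*DX*CH))
      = nn⁻¹*(2*DX^2/γ + DX^2*Lη/2 + 2*DX*Mη + 2*γ*nn*Mη^2) + 2*η*DX*CH := by
    field_simp
  have hninv : nn⁻¹ ≤ 2/p^4 := by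
    rw [inv_eq_one_div, div_le_div_iff₀ (by linarith) (by positivity)]
    linarith
  have hT0 : (0:ℝ) ≤ T := by rw [hT]; positivity
  have hAT : nn⁻¹*(2*DX^2/γ + DX^2*Lη/2 + 2*DX*Mη + 2*γ*nn*Mη^2) ≤ (2/p^4) * T := by
    calc nn⁻¹*(2*DX^2/γ + DX^2*Lη/2 + 2*DX*Mη + 2*γ*nn*Mη^2)
        ≤ nn⁻¹ * T := by
          apply mul_le_mul_of_nonneg_left hA (by positivity)
      _ ≤ (2/p^4) * T := mul_le_mul_of_nonneg_right hninv hT0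
  have hTexp : (2/p^4) * T ≤ 34*(DX^2*LF/p^4) + 34*(DX^2*LH/p^5) + 12*(DX*MF/p^2)
      + 12*(DX*MH/p^3) + 4*(DX*MF/p^4) + 4*(DX*MH/p^5) := by
    have hLηe : Lη = LF + LH/p := by rw [hLη, hη]; ring
    have hMηe : Mη = MF + MH/p := by rw [hMη, hη]; ring
    have step : (2/p^4) * T ≤ (2/p^4) * (17*DX^2*(LF+LH/p) + 6*DX*(p^2*MF+p*MH)
        + 2*DX*(MF+MH/p)) := by
      apply mul_le_mul_of_nonneg_left _ (by positivity)
      rw [hT, hLηe, hMηe]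
      have := mul_le_mul_of_nonneg_left hBp (by positivity : (0:ℝ) ≤ 6*DX)
      linarith
    have heq : (2/p^4) * (17*DX^2*(LF+LH/p) + 6*DX*(p^2*MF+p*MH) + 2*DX*(MF+MH/p))
        = 34*(DX^2*LF/p^4) + 34*(DX^2*LH/p^5) + 12*(DX*MF/p^2) + 12*(DX*MH/p^3)
          + 4*(DX*MF/p^4) + 4*(DX*MH/p^5) := by
      field_simp
      ring
    linarith
  have hpow24 : p^(2:ℕ) ≤ p^(4:ℕ) := pow_le_pow_right₀ hp1 (by norm_num)
  have hpow35 : p^(3:ℕ) ≤ p^(5:ℕ) := pow_le_pow_right₀ hp1 (by norm_num)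
  have h4to2 : DX*MF/p^4 ≤ DX*MF/p^2 :=
    div_le_div_of_nonneg_left (by positivity) (by positivity) hpow24
  have h5to3 : DX*MH/p^5 ≤ DX*MH/p^3 :=
    div_le_div_of_nonneg_left (by positivity) (by positivity) hpow35
  have hηCH : 2*η*DX*CH = 2*(DX*CH/p) := by rw [hη]; ring
  rw [hsplit, hηCH]
  have q1 : (0:ℝ) ≤ DX^2*LF/p^4 := by positivity
  have q2 : (0:ℝ) ≤ DX^2*LH/p^5 := by positivity
  have q3 : (0:ℝ) ≤ DX*MF/p^2 := by positivity
  have q4 : (0:ℝ) ≤ DX*MH/p^3 := by positivity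
  have q5 : (0:ℝ) ≤ DX*CH/p := by positivity
  have heqR : 100*DX*(DX*LF/p^4 + DX*LH/p^5 + MF/p^2 + MH/p^3 + CH/p)
      = 100*(DX^2*LF/p^4) + 100*(DX^2*LH/p^5) + 100*(DX*MF/p^2) + 100*(DX*MH/p^3)
        + 100*(DX*CH/p) := by
    field_simp
  rw [heqR]
  have hchain := le_trans hAT hTexp
  linarith [hchain, h4to2, h5to3, q1, q2, q3, q4, q5]


/-- The gap function `Gap(x̃, G, S) = sup_{y ∈ S} ⟪G y, x̃ − y⟫`, valued in the
extended reals. -/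
noncomputable def Gap {n : ℕ} (G : EuclideanSpace ℝ (Fin n) → EuclideanSpace ℝ (Fin n))
    (S : Set (EuclideanSpace ℝ (Fin n))) (xt : EuclideanSpace ℝ (Fin n)) : EReal :=
  ⨆ y ∈ S, ((⟪G y, xt - y⟫ : ℝ) : EReal)

/-- The solution set `X_F^*` of the variational inequality `VI(F, X)`. -/
def VISol {n : ℕ} (F : EuclideanSpace ℝ (Fin n) → EuclideanSpace ℝ (Fin n))
    (X : Set (EuclideanSpace ℝ (Fin n))) : Set (EuclideanSpace ℝ (Fin n)) :=
  {x | x ∈ X ∧ ∀ y ∈ X, 0 ≤ ⟪F x, y - x⟫}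

set_option maxHeartbeats 1000000 in
/-- **Feasibility rate of deterministic R-OpEx for monotone nonsmooth BVI.**
With constant parameters `τ_k = θ_k = 1`, `η = K^{-1/4}`,
`γ = D_X / (8 D_X (L_F + η L_H) + √(K (M_F² + η² M_H²)))`, the averaged iterate
`x̄_K` satisfies
`Gap(x̄_K, F, X) ≤ C·D_X·(D_X L_F/K + D_X L_H/K^{5/4} + M_F/K^{1/2} + M_H/K^{3/4} + C_H/K^{1/4})`. -/
theorem ropex_feasibility_rate_monotone :
    ∃ C : ℝ, 0 < C ∧
      ∀ (n : ℕ) (X : Set (EuclideanSpace ℝ (Fin n)))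
        (F H : EuclideanSpace ℝ (Fin n) → EuclideanSpace ℝ (Fin n))
        (LF MF LH MH CH DX : ℝ) (K : ℕ) (η γ : ℝ)
        (x : ℕ → EuclideanSpace ℝ (Fin n)),
        X.Nonempty → IsCompact X → Convex ℝ X →
        DX = Metric.diam X / 2 → 0 < DX →
        0 ≤ LF → 0 ≤ MF → 0 ≤ LH → 0 ≤ MH →
        (∀ a ∈ X, ∀ b ∈ X, 0 ≤ ⟪F a - F b, a - b⟫) →
        (∀ a ∈ X, ∀ b ∈ X, 0 ≤ ⟪H a - H b, a - b⟫) →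
        (∀ a ∈ X, ∀ b ∈ X, ‖F a - F b‖ ≤ LF * ‖a - b‖ + MF) →
        (∀ a ∈ X, ∀ b ∈ X, ‖H a - H b‖ ≤ LH * ‖a - b‖ + MH) →
        (∀ a ∈ X, ‖H a‖ ≤ CH) →
        (VISol F X).Nonempty →
        2 ≤ K →
        η = (K : ℝ) ^ (-(1 / 4 : ℝ)) →
        0 < 8 * DX * (LF + η * LH) + Real.sqrt (K * (MF ^ 2 + η ^ 2 * MH ^ 2)) →
        γ = DX / (8 * DX * (LF + η * LH) + Real.sqrt (K * (MF ^ 2 + η ^ 2 * MH ^ 2))) →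
        x 0 = x 1 → x 1 ∈ X →
        (∀ k, 1 ≤ k → k ≤ K - 1 → x (k + 1) ∈ X) →
        (∀ k, 1 ≤ k → k ≤ K - 1 → ∀ z ∈ X,
          ⟪F (x k) + η • H (x k)
              + (F (x k) + η • H (x k) - F (x (k - 1)) - η • H (x (k - 1))), x (k + 1)⟫
              + 1 / (2 * γ) * ‖x (k + 1) - x k‖ ^ 2
            ≤ ⟪F (x k) + η • H (x k)
              + (F (x k) + η • H (x k) - F (x (k - 1)) - η • H (x (k - 1))), z⟫
              + 1 / (2 * γ) * ‖z - x k‖ ^ 2) →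
        Gap F X (((K : ℝ) - 1)⁻¹ • ∑ k ∈ Finset.Icc 1 (K - 1), x (k + 1))
          ≤ ((C * DX * (DX * LF / (K : ℝ) + DX * LH / (K : ℝ) ^ ((5 : ℝ) / 4)
              + MF / (K : ℝ) ^ ((1 : ℝ) / 2) + MH / (K : ℝ) ^ ((3 : ℝ) / 4)
              + CH / (K : ℝ) ^ ((1 : ℝ) / 4)) : ℝ) : EReal) := by
  refine ⟨100, by norm_num, ?_⟩
  intro n X F H LF MF LH MH CH DX K η γ x hXne hXcp hXcv hDXdef hD0 hLF hMF hLH hMH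
    hFmono _hHmono hFlip hHlip hHbd _hsol hK2 hηdef hden hγdef h01 h1X hmem hstep
  -- basic constants
  set κ : ℝ := (K : ℝ) with hκ
  have hκ2 : (2:ℝ) ≤ κ := by rw [hκ]; exact_mod_cast hK2
  set N : ℕ := K - 1 with hN
  have hN1 : 1 ≤ N := by omega
  have hNK : N + 1 = K := by omega
  have hnn : ((N:ℕ) : ℝ) = κ - 1 := by
    rw [hN, hκ]; push_cast [Nat.cast_sub (by omega : 1 ≤ K)]; ring
  set p : ℝ := κ ^ ((1:ℝ)/4) with hp
  have hp0 : 0 < p := Real.rpow_pos_of_pos (by linarith) _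
  have hp1 : (1:ℝ) ≤ p := Real.one_le_rpow (by linarith) (by norm_num)
  have hp4 : p^(4:ℕ) = κ := by
    rw [hp, ← Real.rpow_natCast (κ ^ ((1:ℝ)/4)) 4, ← Real.rpow_mul (by linarith)]
    norm_num
  have hp5 : p^(5:ℕ) = κ ^ ((5:ℝ)/4) := by
    rw [hp, ← Real.rpow_natCast (κ ^ ((1:ℝ)/4)) 5, ← Real.rpow_mul (by linarith)]
    norm_num
  have hp3 : p^(3:ℕ) = κ ^ ((3:ℝ)/4) := by
    rw [hp, ← Real.rpow_natCast (κ ^ ((1:ℝ)/4)) 3, ← Real.rpow_mul (by linarith)]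
    norm_num
  have hp2 : p^(2:ℕ) = κ ^ ((1:ℝ)/2) := by
    rw [hp, ← Real.rpow_natCast (κ ^ ((1:ℝ)/4)) 2, ← Real.rpow_mul (by linarith)]
    norm_num
  have hpp : p^(1:ℕ) = κ ^ ((1:ℝ)/4) := by rw [hp]; ring
  have hη : η = 1/p := by
    rw [one_div, hp, ← Real.rpow_neg (by linarith : (0:ℝ) ≤ κ)]
    exact hηdef
  have hη0 : 0 < η := by rw [hη]; positivity
  set Lη : ℝ := LF + η * LH with hLη
  set Mη : ℝ := MF + η * MH with hMη
  set B : ℝ := Real.sqrt (κ * (MF ^ 2 + η ^ 2 * MH ^ 2)) with hB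
  have hB0 : 0 ≤ B := Real.sqrt_nonneg _
  have hLη0 : 0 ≤ Lη := by have := mul_nonneg hη0.le hLH; rw [hLη]; linarith
  have hMη0 : 0 ≤ Mη := by have := mul_nonneg hη0.le hMH; rw [hMη]; linarith
  have hγpos : 0 < γ := by rw [hγdef]; exact div_pos hD0 hden
  have hγden : γ * (8 * DX * Lη + B) = DX := by
    rw [hγdef]
    exact div_mul_cancel₀ DX (ne_of_gt hden)
  have hγL : γ * Lη ≤ 1/8 := by
    nlinarith [mul_nonneg hγpos.le hB0, hD0]
  have hCH0 : 0 ≤ CH := le_trans (norm_nonneg _) (hHbd (x 1) h1X)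
  -- diameter
  have hdiam : ∀ a ∈ X, ∀ b ∈ X, ‖a - b‖ ≤ 2 * DX := by
    intro a ha b hb
    rw [← dist_eq_norm]
    calc dist a b ≤ Metric.diam X := Metric.dist_le_diam_of_mem hXcp.isBounded ha hb
    _ = 2 * DX := by rw [hDXdef]; ring
  -- membership
  have hmem' : ∀ k ≤ N + 1, x k ∈ X := by
    intro k hk
    match k with
    | 0 => rw [h01]; exact h1X
    | 1 => exact h1X
    | (j+2) => exact hmem (j+1) (by omega) (by omega)
  -- the combined operator
  set G : ℕ → EuclideanSpace ℝ (Fin n) := fun k => F (x k) + η • H (x k) with hG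
  have hG01 : G 0 = G 1 := by rw [hG]; simp only [h01]
  have hd : ∀ k, 1 ≤ k → k ≤ N + 1 → ‖G k - G (k-1)‖ ≤ Lη * ‖x k - x (k-1)‖ + Mη := by
    intro k hk1 hk2
    have e1 : G k - G (k-1) = (F (x k) - F (x (k-1))) + η • (H (x k) - H (x (k-1))) := by
      rw [hG]; simp only []; rw [smul_sub]; abel
    have hxk : x k ∈ X := hmem' k hk2
    have hxk1 : x (k-1) ∈ X := hmem' (k-1) (by omega)
    have h2 : ‖G k - G (k-1)‖ ≤ ‖F (x k) - F (x (k-1))‖ + η * ‖H (x k) - H (x (k-1))‖ := by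
      rw [e1]
      calc ‖(F (x k) - F (x (k-1))) + η • (H (x k) - H (x (k-1)))‖
          ≤ ‖F (x k) - F (x (k-1))‖ + ‖η • (H (x k) - H (x (k-1)))‖ := norm_add_le _ _
      _ = ‖F (x k) - F (x (k-1))‖ + η * ‖H (x k) - H (x (k-1))‖ := by
          rw [norm_smul, Real.norm_eq_abs, abs_of_pos hη0]
    have h3 := hFlip (x k) hxk (x (k-1)) hxk1
    have h4 := hHlip (x k) hxk (x (k-1)) hxk1
    have h5 := mul_le_mul_of_nonneg_left h4 hη0.le
    rw [hLη, hMη]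
    nlinarith [h2, h3, h5]
  -- three point property
  have hstar : ∀ k, 1 ≤ k → k ≤ N → ∀ z ∈ X,
      ⟪G k + (G k - G (k-1)), x (k+1) - z⟫ ≤
        1/(2*γ) * (‖z - x k‖^2 - ‖z - x (k+1)‖^2 - ‖x (k+1) - x k‖^2) := by
    intro k hk1 hkN
    apply prox_three_point hXcv _ (x k) (x (k+1)) γ hγpos (hmem' (k+1) (by omega))
    intro z hz
    have hv : F (x k) + η • H (x k)
        + (F (x k) + η • H (x k) - F (x (k-1)) - η • H (x (k-1)))
        = G k + (G k - G (k-1)) := by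
      rw [hG]; simp only []; abel
    have := hstep k hk1 (by omega) z hz
    rw [hv] at this
    exact this
  -- core bound
  have hcore := core_bound (X := X) x G N hN1 γ Lη Mη DX hγpos hLη0 hMη0 hD0 hγL
    hmem' h01 hG01 hd hdiam hstar
  have hnn1 : (1:ℝ) ≤ ((N:ℕ):ℝ) := by exact_mod_cast hN1
  have hnnpos : (0:ℝ) < ((N:ℕ):ℝ) := by linarith
  have hBp : B ≤ p^2*MF + p*MH := by
    have hb0 : (0:ℝ) ≤ MF + η*MH := by positivity
    have b1 : κ*(MF^2+η^2*MH^2) ≤ (Real.sqrt κ * (MF + η*MH))^2 := by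
      rw [mul_pow, Real.sq_sqrt (by linarith : (0:ℝ) ≤ κ)]
      nlinarith [mul_nonneg hMF (mul_nonneg hη0.le hMH)]
    have b2 : B ≤ Real.sqrt κ * (MF + η*MH) := by
      rw [hB]
      calc Real.sqrt (κ*(MF^2+η^2*MH^2)) ≤ Real.sqrt ((Real.sqrt κ * (MF + η*MH))^2) :=
        Real.sqrt_le_sqrt b1
      _ = Real.sqrt κ * (MF + η*MH) := Real.sqrt_sq (by positivity)
    have b3 : Real.sqrt κ = p^2 := by rw [hp2, Real.sqrt_eq_rpow]
    rw [b3, hη] at b2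
    calc B ≤ p^2*(MF + 1/p*MH) := b2
    _ = p^2*MF + p*MH := by field_simp
  have hBsqp : B^2 = p^4*(MF^2+η^2*MH^2) := by
    rw [hp4, hB]
    exact Real.sq_sqrt (by positivity)
  have hnnκp : ((N:ℕ):ℝ) ≤ p^4 := by rw [hp4, hnn]; linarith
  have hnn2p : p^4 ≤ 2*((N:ℕ):ℝ) := by rw [hp4, hnn]; linarith
  have hnum := num_final DX LF MF LH MH CH p ((N:ℕ):ℝ) γ B Lη Mη η hD0 hLF hMF hLH hMH
    hCH0 hp1 hη hLη hMη hγpos hγden hB0 hBp hBsqp hnn1 hnnκp hnn2p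
  -- per z bound
  have main : ∀ z ∈ X, (⟪F z, ((κ - 1)⁻¹ • ∑ k ∈ Finset.Icc 1 N, x (k + 1)) - z⟫ : ℝ) ≤
      100*DX*(DX*LF/p^4 + DX*LH/p^5 + MF/p^2 + MH/p^3 + CH/p) := by
    intro z hz
    have hFz : ∀ k ∈ Finset.Icc 1 N, (⟪F z, x (k+1) - z⟫ : ℝ) ≤
        ⟪G (k+1), x (k+1) - z⟫ + 2*η*DX*CH := by
      intro k hk
      rw [Finset.mem_Icc] at hk
      have hxm : x (k+1) ∈ X := hmem' (k+1) (by omega)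
      have hmono := hFmono (x (k+1)) hxm z hz
      rw [inner_sub_left] at hmono
      have hGdec : (⟪G (k+1), x (k+1) - z⟫ : ℝ)
          = ⟪F (x (k+1)), x (k+1) - z⟫ + η * ⟪H (x (k+1)), x (k+1) - z⟫ := by
        rw [hG]; simp only []
        rw [inner_add_left, real_inner_smul_left]
      have hHin : |(⟪H (x (k+1)), x (k+1) - z⟫ : ℝ)| ≤ CH * (2*DX) := by
        calc |(⟪H (x (k+1)), x (k+1) - z⟫ : ℝ)| ≤ ‖H (x (k+1))‖ * ‖x (k+1) - z‖ :=
          abs_real_inner_le_norm _ _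
        _ ≤ CH * (2*DX) := mul_le_mul (hHbd _ hxm) (hdiam _ hxm z hz) (norm_nonneg _) hCH0
      have h5 : -(2*η*DX*CH) ≤ η * (⟪H (x (k+1)), x (k+1) - z⟫ : ℝ) := by
        have h6 : -(CH*(2*DX)) ≤ (⟪H (x (k+1)), x (k+1) - z⟫ : ℝ) := by
          linarith [neg_abs_le (⟪H (x (k+1)), x (k+1) - z⟫ : ℝ)]
        calc -(2*η*DX*CH) = η * (-(CH*(2*DX))) := by ring
        _ ≤ η * (⟪H (x (k+1)), x (k+1) - z⟫ : ℝ) := mul_le_mul_of_nonneg_left h6 hη0.le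
      linarith [hmono, hGdec.le, hGdec.ge, h5]
    have hsum1 := Finset.sum_le_sum hFz
    rw [Finset.sum_add_distrib, Finset.sum_const, Nat.card_Icc, Nat.add_sub_cancel] at hsum1
    have hns : ((N:ℕ) • (2*η*DX*CH) : ℝ) = ((N:ℕ):ℝ)*(2*η*DX*CH) := nsmul_eq_mul _ _
    have hsum2 : ∑ k ∈ Finset.Icc 1 N, (⟪F z, x (k+1) - z⟫ : ℝ) ≤
        (2*DX^2/γ + DX^2*Lη/2 + 2*DX*Mη + 2*γ*((N:ℕ):ℝ)*Mη^2) + ((N:ℕ):ℝ)*(2*η*DX*CH) := by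
      have hcz := hcore z hz
      linarith [hsum1, hcz, hns.le, hns.ge]
    have havg : ((κ - 1)⁻¹ • ∑ k ∈ Finset.Icc 1 N, x (k + 1)) - z
        = (((N:ℕ):ℝ))⁻¹ • ∑ k ∈ Finset.Icc 1 N, (x (k+1) - z) := by
      rw [← hnn, Finset.sum_sub_distrib, smul_sub, Finset.sum_const, Nat.card_Icc,
        Nat.add_sub_cancel]
      congr 1
      rw [← Nat.cast_smul_eq_nsmul ℝ, smul_smul, inv_mul_cancel₀ (ne_of_gt hnnpos), one_smul]
    have hinner : (⟪F z, (((N:ℕ):ℝ))⁻¹ • ∑ k ∈ Finset.Icc 1 N, (x (k+1) - z)⟫ : ℝ)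
        = (((N:ℕ):ℝ))⁻¹ * ∑ k ∈ Finset.Icc 1 N, (⟪F z, x (k+1) - z⟫ : ℝ) := by
      rw [real_inner_smul_right, inner_sum]
    calc (⟪F z, ((κ - 1)⁻¹ • ∑ k ∈ Finset.Icc 1 N, x (k + 1)) - z⟫ : ℝ)
        = (((N:ℕ):ℝ))⁻¹ * ∑ k ∈ Finset.Icc 1 N, (⟪F z, x (k+1) - z⟫ : ℝ) := by
          rw [havg, hinner]
      _ ≤ (((N:ℕ):ℝ))⁻¹ * ((2*DX^2/γ + DX^2*Lη/2 + 2*DX*Mη + 2*γ*((N:ℕ):ℝ)*Mη^2)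
            + ((N:ℕ):ℝ)*(2*η*DX*CH)) := by
          apply mul_le_mul_of_nonneg_left hsum2 (by positivity)
      _ ≤ _ := hnum
  -- conclude in EReal
  apply iSup₂_le
  intro y hy
  have h := main y hy
  rw [hp4, hp5, hp3, hp2] at h
  exact EReal.coe_le_coe_iff.mpr h
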